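/- Let K be an algebraically closed valued field with coefficient field k ⊆ 𝒪 and residue map res : 𝒪 → k identity on k, and suppose tr.deg(K/k) = κ with κ infinite. Let F₀ ⊆ K be a subfield with |F₀| < κ, and let b ∈ k. Then there exists a ∈ b + 𝓜 (i.e., res(a) = b) such that a is transcendental over F₀. -/

import Mathlib

open Cardinal Polynomial

theorem alg_transfer {K' : Type*} [Field K'] {E L : Type*} [CommRing E] [CommRing L]
    [Algebra E K'] [Algebra L K'] (f : E →+* L)
    (hinj : Function.Injective (algebraMap E K'))
    (hf : ∀ e, algebraMap L K' (f e) = algebraMap E K' e) {x : K'}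
    (h : IsAlgebraic E x) : IsAlgebraic L x := by
  obtain ⟨p, hp, hpx⟩ := h
  have hfinj : Function.Injective f := fun a b hab => hinj (by rw [← hf, ← hf, hab])
  refine ⟨p.map f, (Polynomial.map_ne_zero_iff hfinj).2 hp, ?_⟩
  rw [Polynomial.aeval_def, Polynomial.eval₂_map,
    (show (algebraMap L K').comp f = algebraMap E K' from RingHom.ext hf)]
  rwa [Polynomial.aeval_def] at hpx

theorem aux_restrict {F E : Type*} [Field F] [Field E] [Algebra F E]
    (A : Subalgebra F E) {N : IntermediateField F E} {x : E}
    (p : Polynomial ↥N) (hp : p ≠ 0) (hroot : Polynomial.aeval x p = 0)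
    (V : E) (hV : V ≠ 0) (hc : ∀ i, (p.coeff i : E) * V ∈ A) : IsAlgebraic ↥A x := by
  classical
  set n := p.natDegree with hn
  set q : Polynomial ↥A :=
    ∑ i ∈ Finset.range (n + 1), Polynomial.C (⟨(p.coeff i : E) * V, hc i⟩ : ↥A) * Polynomial.X ^ i
    with hq
  have hqcoeff : ∀ j, q.coeff j =
      if j ∈ Finset.range (n + 1) then (⟨(p.coeff j : E) * V, hc j⟩ : ↥A) else 0 := by
    intro j
    rw [hq, Polynomial.finset_sum_coeff]
    simp only [Polynomial.coeff_C_mul, Polynomial.coeff_X_pow, mul_ite, mul_one, mul_zero]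
    exact Finset.sum_ite_eq (Finset.range (n + 1)) j _
  have hq0 : q ≠ 0 := by
    intro h0
    have h1 := hqcoeff n
    rw [h0, if_pos (Finset.self_mem_range_succ n)] at h1
    have h2 : (p.coeff n : E) * V = 0 := by
      have := congrArg (Subtype.val) h1.symm
      simpa using this
    exact (mul_ne_zero (fun hz => hp (Polynomial.leadingCoeff_eq_zero.1
      (by exact Subtype.ext hz))) hV) h2
  refine ⟨q, hq0, ?_⟩
  have hval : Polynomial.aeval x q =
      ∑ i ∈ Finset.range (n + 1), ((p.coeff i : E) * V) * x ^ i := by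
    rw [hq]
    rw [map_sum]
    refine Finset.sum_congr rfl fun i _ => ?_
    rw [map_mul, map_pow, Polynomial.aeval_C, Polynomial.aeval_X]
    rfl
  rw [hval]
  have h2 : ∑ i ∈ Finset.range (n + 1), ((p.coeff i : E) * V) * x ^ i
      = V * ∑ i ∈ Finset.range (n + 1), (p.coeff i : E) * x ^ i := by
    rw [Finset.mul_sum]
    exact Finset.sum_congr rfl fun i _ => by ring
  have h3 : ∑ i ∈ Finset.range (n + 1), (p.coeff i : E) * x ^ i = 0 := by
    have h4 := Polynomial.aeval_eq_sum_range (S := E) (p := p) x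
    rw [hroot] at h4
    calc ∑ i ∈ Finset.range (n + 1), (p.coeff i : E) * x ^ i
        = ∑ i ∈ Finset.range (n + 1), p.coeff i • x ^ i :=
          Finset.sum_congr rfl fun i _ => by rw [Algebra.smul_def]; rfl
      _ = 0 := h4.symm
  rw [h2, h3, mul_zero]

theorem fin_char {F E : Type*} [Field F] [Field E] [Algebra F E] {s : Set E}
    (hAlg : Algebra.IsAlgebraic ↥(IntermediateField.adjoin F s) E) (y : E) :
    ∃ t : Finset E, ↑t ⊆ s ∧ IsAlgebraic ↥(IntermediateField.adjoin F (↑t : Set E)) y := by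
  classical
  obtain ⟨p, hp, hroot⟩ := hAlg.isAlgebraic y
  choose tf htf1 htf2 using fun i : ℕ =>
    IntermediateField.exists_finset_of_mem_adjoin (SetLike.coe_mem (p.coeff i))
  set tt := (Finset.range (p.natDegree + 1)).biUnion tf with htt
  have httsub : (↑tt : Set E) ⊆ s := by
    intro z hz
    simp only [htt, Finset.coe_biUnion, Set.mem_iUnion, Finset.mem_coe] at hz
    obtain ⟨i, _, hzi⟩ := hz
    exact htf1 i hzi
  refine ⟨tt, httsub, ?_⟩
  have hc : ∀ i, (↑(p.coeff i) : E) * 1 ∈ (IntermediateField.adjoin F (↑tt : Set E)).toSubalgebra := by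
    intro i
    rw [mul_one]
    by_cases hi : i ∈ Finset.range (p.natDegree + 1)
    · refine IntermediateField.adjoin.mono F _ _ ?_ (htf2 i)
      intro z hz
      simp only [htt, Finset.coe_biUnion, Set.mem_iUnion, Finset.mem_coe]
      exact ⟨i, hi, hz⟩
    · have h0 : p.coeff i = 0 := Polynomial.coeff_eq_zero_of_natDegree_lt
        (by simpa using Finset.mem_range.not.1 hi)
      rw [h0]
      simpa using zero_mem (IntermediateField.adjoin F (↑tt : Set E))
  have halg := aux_restrict (IntermediateField.adjoin F (↑tt : Set E)).toSubalgebra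
    p hp hroot 1 one_ne_zero hc
  exact alg_transfer ⟨⟨⟨fun e => ⟨e.1, e.2⟩, rfl⟩, fun _ _ => rfl⟩, rfl, fun _ _ => rfl⟩
    (fun a b h => Subtype.ext (show (a : E) = (b : E) from h)) (fun _ => rfl) halg

theorem field_adjoin_to_algebra_adjoin {F E : Type*} [Field F] [Field E] [Algebra F E]
    {S : Set E} {x : E} (h : IsAlgebraic ↥(IntermediateField.adjoin F S) x) :
    IsAlgebraic ↥(Algebra.adjoin F S) x := by
  classical
  obtain ⟨p, hp, hroot⟩ := h
  have hrep : ∀ i : ℕ, ∃ v : E, v ≠ 0 ∧ v ∈ Algebra.adjoin F S ∧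
      (↑(p.coeff i) : E) * v ∈ Algebra.adjoin F S := by
    intro i
    obtain ⟨r, sden, heq⟩ := (IntermediateField.mem_adjoin_iff F _).1 (SetLike.coe_mem (p.coeff i))
    by_cases h0 : MvPolynomial.aeval (Subtype.val : S → E) sden = 0
    · exact ⟨1, one_ne_zero, one_mem _,
        by rw [heq, h0, div_zero, zero_mul]; exact zero_mem _⟩
    · refine ⟨_, h0, ?_, ?_⟩
      · rw [Algebra.adjoin_eq_range]; exact ⟨sden, rfl⟩
      · rw [heq, div_mul_cancel₀ _ h0, Algebra.adjoin_eq_range]; exact ⟨r, rfl⟩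
  choose v hv0 hvmem hcv using hrep
  set V := ∏ i ∈ Finset.range (p.natDegree + 1), v i with hV
  have hV0 : V ≠ 0 := Finset.prod_ne_zero_iff.2 fun i _ => hv0 i
  have hc : ∀ i, (↑(p.coeff i) : E) * V ∈ Algebra.adjoin F S := by
    intro i
    by_cases hi : i ∈ Finset.range (p.natDegree + 1)
    · rw [hV, ← Finset.mul_prod_erase _ _ hi, ← mul_assoc]
      exact mul_mem (hcv i) (prod_mem fun j _ => hvmem j)
    · have h0 : p.coeff i = 0 := Polynomial.coeff_eq_zero_of_natDegree_lt
        (by simpa using Finset.mem_range.not.1 hi)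
      rw [h0, ZeroMemClass.coe_zero, zero_mul]
      exact zero_mem _
  exact aux_restrict _ p hp hroot V hV0 hc

theorem transcendental_diff {F E : Type*} [Field F] [Field E] [Algebra F E] {s : Set E}
    (hs : AlgebraicIndependent F ((↑) : s → E)) {x : E} (hx : x ∈ s) :
    Transcendental ↥(Algebra.adjoin F (s \ {x})) x := by
  have hsub : AlgebraicIndependent F ((↑) : ↥(s \ {x}) → E) := hs.mono Set.diff_subset
  have hg : Function.Injective (fun o : Option ↥(s \ {x}) =>
      (Option.elim o ⟨x, hx⟩ (fun z => (⟨↑z, z.2.1⟩ : ↥s)))) := by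
    rintro (_ | a) (_ | b) hab
    · rfl
    · exact absurd (show x = (b : E) from congrArg (Subtype.val : ↥s → E) hab).symm b.2.2
    · exact absurd (show (a : E) = x from congrArg (Subtype.val : ↥s → E) hab) a.2.2
    · exact congrArg some (Subtype.ext
        (show (a : E) = (b : E) from congrArg (Subtype.val : ↥s → E) hab))
  have hopt : AlgebraicIndependent F (fun o : Option ↥(s \ {x}) => o.elim x (fun z => ↑z)) := by
    have h2 := hs.comp _ hg
    convert h2 using 1
    funext o
    cases o <;> rfl
  have h3 := (hsub.option_iff_transcendental x).1 hopt
  rwa [Subtype.range_coe] at h3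


set_option maxHeartbeats 2000000 in
theorem step_reduce {E : Type*} [Field E] {F N : Type*} [Field F] [Field N] [Algebra F E]
    [Algebra N E] [Algebra F N] [IsScalarTower F N E] (T : Set E)
    (hTN : ∀ y ∈ T, IsIntegral N y) {x : E}
    (hx : IsAlgebraic ↥(IntermediateField.adjoin F T) x) : IsAlgebraic N x := by
  have hle : IntermediateField.adjoin F T ≤ (IntermediateField.adjoin N T).restrictScalars F :=
    IntermediateField.adjoin_le_iff.2
      (fun z hz => (IntermediateField.mem_restrictScalars _).2 (IntermediateField.subset_adjoin _ _ hz))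
  have hxM : IsAlgebraic ↥(IntermediateField.adjoin N T) x := alg_transfer
    ⟨⟨⟨fun e => ⟨↑e, hle e.2⟩, rfl⟩, fun _ _ => rfl⟩, rfl, fun _ _ => rfl⟩
    (fun a₁ a₂ h => Subtype.ext (show (a₁ : E) = (a₂ : E) from h)) (fun _ => rfl) hx
  haveI h1 : Algebra.IsAlgebraic N ↥(IntermediateField.adjoin N T) :=
    IntermediateField.isAlgebraic_adjoin hTN
  haveI : Algebra.IsIntegral N ↥(IntermediateField.adjoin N T) :=
    Algebra.isAlgebraic_iff_isIntegral.1 h1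
  exact (isIntegral_trans x (isAlgebraic_iff_isIntegral.1 hxM)).isAlgebraic

set_option maxHeartbeats 2000000 in
set_option synthInstance.maxHeartbeats 1000000 in
/-- Key step for `κ`-universality of the residue map: if `K` is an algebraically closed
valued field with coefficient field `k`, `trdeg(K/k) = κ` infinite, `F₀ ⊆ K` is a subfield
with `|F₀| < κ` and `b ∈ k`, then the infinitesimal neighbourhood `b + 𝓜` contains an
element transcendental over `F₀`. -/
theorem stmt12 {K : Type*} [Field K] [IsAlgClosed K] (O : ValuationSubring K)
    (k : Subfield K) (hk : ∀ a ∈ k, a ∈ O)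
    (hres : ∀ x ∈ O, ∃ b ∈ k, O.valuation (x - b) < 1)
    {κ : Cardinal} (hκ : ℵ₀ ≤ κ)
    (htr : ∃ s : Set K, IsTranscendenceBasis k ((↑) : s → K) ∧ #s = κ)
    (F₀ : Subfield K) (hF₀ : #F₀ < κ) (b : K) (hb : b ∈ k) :
    ∃ a : K, O.valuation (a - b) < 1 ∧ Transcendental F₀ a := by
  classical
  obtain ⟨s, hs, hsκ⟩ := htr
  -- Step 1: there is a nonzero element of the maximal ideal
  have hm : ∃ m : K, m ≠ 0 ∧ O.valuation m < 1 := by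
    by_contra hcon
    push_neg at hcon
    have hKO : ∀ x : K, x ∈ O := by
      intro x
      by_contra hx
      have hx0 : x ≠ 0 := fun h0 => hx (h0 ▸ O.zero_mem)
      have h1 : ¬ O.valuation x ≤ 1 := fun h1 => hx (O.mem_of_valuation_le_one x h1)
      have hxinv : O.valuation x⁻¹ < 1 := by
        rw [map_inv₀]; exact inv_lt_one_of_one_lt₀ (not_le.1 h1)
      exact absurd hxinv (not_lt.2 (hcon _ (inv_ne_zero hx0)))
    have hOk : ∀ x : K, x ∈ k := by
      intro x
      obtain ⟨c, hc, hvc⟩ := hres x (hKO x)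
      have hxc : x - c = 0 := by
        by_contra hne; exact absurd hvc (not_lt.2 (hcon _ hne))
      rw [sub_eq_zero] at hxc; exact hxc ▸ hc
    have hsne : s.Nonempty := by
      rw [Set.nonempty_iff_ne_empty]; rintro rfl
      rw [Cardinal.mk_emptyCollection] at hsκ
      rw [← hsκ] at hκ
      exact absurd hκ (not_le.2 Cardinal.aleph0_pos)
    obtain ⟨x, hx⟩ := hsne
    have htrx : Transcendental ↥k x := hs.1.transcendental ⟨x, hx⟩
    exact htrx (isAlgebraic_algebraMap (⟨x, hOk x⟩ : k))
  obtain ⟨m, hm0, hmlt⟩ := hm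
  by_contra hgoal
  push_neg at hgoal
  have halg0 : ∀ a : K, O.valuation (a - b) < 1 → IsAlgebraic ↥F₀ a :=
    fun a ha => not_not.1 (hgoal a ha)
  set T : Set K := ↑F₀ ∪ {m} with hT
  let L : IntermediateField ↥k K := IntermediateField.adjoin ↥k T
  have hbL : b ∈ L := L.algebraMap_mem ⟨b, hb⟩
  have hmL : m ∈ L := IntermediateField.subset_adjoin _ _ (Or.inr rfl)
  have hmemLalg : ∀ z : K, z ∈ L → IsAlgebraic ↥L z := fun z hz => by
    exact isAlgebraic_algebraMap (⟨z, hz⟩ : ↥L)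
  -- Step 2: every element of K is algebraic over L
  have hLalg : ∀ x : K, IsAlgebraic ↥L x := by
    intro x
    by_cases hx : x ∈ O
    · have hva : O.valuation (b + x * m - b) < 1 := by
        rw [add_sub_cancel_left, map_mul]
        calc O.valuation x * O.valuation m ≤ 1 * O.valuation m :=
              mul_le_mul_left ((O.valuation_le_one_iff x).2 hx) _
          _ = O.valuation m := one_mul _
          _ < 1 := hmlt
      have ha : IsAlgebraic ↥F₀ (b + x * m) := halg0 _ hva
      have haL : IsAlgebraic ↥L (b + x * m) := alg_transfer
        ⟨⟨⟨fun e => ⟨↑e, IntermediateField.subset_adjoin _ _ (Or.inl e.2)⟩, rfl⟩,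
          fun _ _ => rfl⟩, rfl, fun _ _ => rfl⟩
        (fun a₁ a₂ h => Subtype.ext (show (a₁ : K) = (a₂ : K) from h)) (fun _ => rfl) ha
      have h1 : IsIntegral ↥L (b + x * m) := isAlgebraic_iff_isIntegral.1 haL
      have h2 : IsIntegral ↥L b := isAlgebraic_iff_isIntegral.1 (hmemLalg b hbL)
      have h3 : IsIntegral ↥L (m⁻¹) := isAlgebraic_iff_isIntegral.1 (hmemLalg _ (L.inv_mem hmL))
      have h4 : IsIntegral ↥L ((b + x * m - b) * m⁻¹) := (h1.sub h2).mul h3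
      have h5 : (b + x * m - b) * m⁻¹ = x := by
        rw [add_sub_cancel_left, mul_inv_cancel_right₀ hm0]
      exact h5 ▸ h4.isAlgebraic
    · have hvi : O.valuation (b + x⁻¹ - b) < 1 := by
        rw [add_sub_cancel_left, map_inv₀]
        exact inv_lt_one_of_one_lt₀
          (not_le.1 (fun h1 => hx (O.mem_of_valuation_le_one x h1)))
      have ha : IsAlgebraic ↥F₀ (b + x⁻¹) := halg0 _ hvi
      have haL : IsAlgebraic ↥L (b + x⁻¹) := alg_transfer
        ⟨⟨⟨fun e => ⟨↑e, IntermediateField.subset_adjoin _ _ (Or.inl e.2)⟩, rfl⟩,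
          fun _ _ => rfl⟩, rfl, fun _ _ => rfl⟩
        (fun a₁ a₂ h => Subtype.ext (show (a₁ : K) = (a₂ : K) from h)) (fun _ => rfl) ha
      have h1 : IsIntegral ↥L (b + x⁻¹) := isAlgebraic_iff_isIntegral.1 haL
      have h2 : IsIntegral ↥L b := isAlgebraic_iff_isIntegral.1 (hmemLalg b hbL)
      have h4 : IsAlgebraic ↥L (x⁻¹) := by
        have h6 := (h1.sub h2).isAlgebraic
        rwa [add_sub_cancel_left] at h6
      exact IsAlgebraic.inv_iff.1 h4
  -- Step 3: T is small
  have hTcard : #↥T < κ := by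
    calc #↥T ≤ #↥(↑F₀ : Set K) + #({m} : Set K) := Cardinal.mk_union_le _ _
      _ = #↥F₀ + 1 := by rw [Cardinal.mk_singleton]; rfl
      _ < κ := Cardinal.add_lt_of_lt hκ hF₀ (Cardinal.one_lt_aleph0.trans_le hκ)
  -- Step 4: supports of elements of T inside the transcendence basis
  have hsAlg : Algebra.IsAlgebraic ↥(IntermediateField.adjoin ↥k s) K := by
    have h0 := hs.isAlgebraic_field
    rwa [Subtype.range_coe] at h0
  choose tf htf1 htf2 using fun y : ↥T => fin_char hsAlg (y : K)
  set Sstar : Set K := ⋃ y : ↥T, (↑(tf y) : Set K) with hSstar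
  have hSsub : Sstar ⊆ s := Set.iUnion_subset fun y => htf1 y
  have hScard : #↥Sstar < κ := by
    rcases lt_or_eq_of_le hκ with hlt | heq
    · rcases isEmpty_or_nonempty ↥T with hT0 | hT1
      · have : Sstar = ∅ := by
          rw [hSstar]; exact Set.iUnion_of_empty _
        rw [this, Cardinal.mk_emptyCollection]
        exact lt_of_lt_of_le Cardinal.aleph0_pos hκ
      · calc #↥Sstar ≤ #↥T * ⨆ y : ↥T, #↥(↑(tf y) : Set K) := Cardinal.mk_iUnion_le _
          _ ≤ #↥T * ℵ₀ :=
            mul_le_mul_right (ciSup_le' fun y => ((tf y).finite_toSet.lt_aleph0).le) _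
          _ ≤ max (max #↥T ℵ₀) ℵ₀ := Cardinal.mul_le_max _ _
          _ < κ := max_lt (max_lt hTcard hlt) hlt
    · have hTfin : T.Finite := by
        rw [← Cardinal.lt_aleph0_iff_set_finite]
        exact heq ▸ hTcard
      haveI := hTfin.to_subtype
      have hfin : Sstar.Finite := Set.finite_iUnion fun y => (tf y).finite_toSet
      exact lt_of_lt_of_le hfin.lt_aleph0 (le_of_eq heq)
  -- Step 5: pick x0 ∈ s not used by any support
  have hns : ¬ (s ⊆ Sstar) := by
    intro hsub
    exact absurd (hsκ ▸ Cardinal.mk_le_mk_of_subset hsub) (not_le.2 hScard)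
  obtain ⟨x0, hx0s, hx0n⟩ := Set.not_subset.1 hns
  -- Step 6: every element of T is integral over N
  have hTN : ∀ y ∈ T, IsIntegral ↥(IntermediateField.adjoin ↥k (s \ {x0})) y := by
    intro y hy
    have h1 := htf2 ⟨y, hy⟩
    have hsub2 : (↑(tf ⟨y, hy⟩) : Set K) ⊆ s \ {x0} := by
      intro z hz
      refine ⟨htf1 _ hz, ?_⟩
      intro hzx
      apply hx0n
      rw [hSstar]
      exact Set.mem_iUnion.2 ⟨⟨y, hy⟩, Set.mem_singleton_iff.1 hzx ▸ hz⟩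
    have hle := IntermediateField.adjoin.mono (↥k) _ _ hsub2
    have h2 : IsAlgebraic ↥(IntermediateField.adjoin ↥k (s \ {x0})) y := alg_transfer
      ⟨⟨⟨fun e => ⟨↑e, hle e.2⟩, rfl⟩, fun _ _ => rfl⟩, rfl, fun _ _ => rfl⟩
      (fun a₁ a₂ h => Subtype.ext (show (a₁ : K) = (a₂ : K) from h)) (fun _ => rfl) h1
    exact isAlgebraic_iff_isIntegral.1 h2
  have hNalg : IsAlgebraic ↥(IntermediateField.adjoin ↥k (s \ {x0})) x0 :=
    step_reduce (N := ↥(IntermediateField.adjoin ↥k (s \ {x0}))) T hTN (hLalg x0)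
  exact transcendental_diff hs.1 hx0s (field_adjoin_to_algebra_adjoin hNalg)
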